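/- Let k be a field of characteristic 2, n ≥ 2, and A ∈ GL(n,k). Suppose A² = p·Id where p ∈ k is not a square in k. Then n is even and there exists C ∈ GL(n,k) such that C·A·C⁻¹ = L_{n/2,p}. -/

import Mathlib

/-- The n×n block-diagonal matrix L_{n/2,p} (for n even): n/2 diagonal 2×2
blocks, each equal to !![0,1;p,0]. -/
def Lhalf {k : Type*} [Field k] (n : ℕ) (p : k) : Matrix (Fin n) (Fin n) k :=
  Matrix.of fun i j =>
    if (i : ℕ) % 2 = 0 ∧ (j : ℕ) = (i : ℕ) + 1 then 1
    else if (i : ℕ) % 2 = 1 ∧ (j : ℕ) + 1 = (i : ℕ) then p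
    else 0

set_option maxHeartbeats 1000000

/-- Let k be a field of characteristic 2, n ≥ 2, A ∈ GL(n,k)
with A² = p·Id where p is not a square in k. Then n is even and there exists
C ∈ GL(n,k) with C·A·C⁻¹ = L_{n/2,p}. -/
theorem stmt_11 {k : Type*} [Field k] [CharP k 2] {n : ℕ} (hn : 2 ≤ n)
    (A : (Matrix (Fin n) (Fin n) k)ˣ) (p : k) (hp : ¬ ∃ t : k, t ^ 2 = p)
    (hA2 : (A : Matrix (Fin n) (Fin n) k) ^ 2 = p • (1 : Matrix (Fin n) (Fin n) k)) :
    Even n ∧ ∃ C : (Matrix (Fin n) (Fin n) k)ˣ,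
      (C : Matrix (Fin n) (Fin n) k) * (A : Matrix (Fin n) (Fin n) k) *
        (↑C⁻¹ : Matrix (Fin n) (Fin n) k) = Lhalf n p := by
  classical
  set q : Polynomial k := Polynomial.X ^ 2 - Polynomial.C p with hqdef
  have hqmonic : q.Monic := by
    apply Polynomial.monic_X_pow_sub_C p (by norm_num)
  have hqdeg : q.natDegree = 2 := by
    rw [hqdef]
    compute_degree!
  have hirr : Irreducible q := by
    rw [Polynomial.irreducible_iff_roots_eq_zero_of_degree_le_three (by omega) (by omega)]
    rw [Multiset.eq_zero_iff_forall_notMem]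
    intro t ht
    rw [Polynomial.mem_roots hqmonic.ne_zero, Polynomial.IsRoot, hqdef] at ht
    simp at ht
    exact hp ⟨t, by linear_combination ht⟩
  haveI := Fact.mk hirr
  set K := AdjoinRoot q with hK
  set V := Fin n → k with hV
  set f : Module.End k V := Matrix.mulVecLin (A : Matrix (Fin n) (Fin n) k) with hf
  have haev : (Polynomial.aeval f) q = 0 := by
    rw [hqdef]
    simp only [map_sub, map_pow, Polynomial.aeval_X, Polynomial.aeval_C, sub_eq_zero]
    refine LinearMap.ext fun v => ?_
    rw [pow_two, Module.End.mul_apply, Module.algebraMap_end_apply]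
    show Matrix.mulVec (A : Matrix (Fin n) (Fin n) k)
      (Matrix.mulVec (A : Matrix (Fin n) (Fin n) k) v) = p • v
    rw [Matrix.mulVec_mulVec, ← pow_two, hA2, Matrix.smul_mulVec, Matrix.one_mulVec]
  have H : ∀ a ∈ Ideal.span {q}, (Polynomial.aeval f).toRingHom a = 0 := by
    intro a ha
    rw [Ideal.mem_span_singleton] at ha
    obtain ⟨c, rfl⟩ := ha
    simp only [AlgHom.toRingHom_eq_coe, RingHom.coe_coe, map_mul, haev, zero_mul]
  set ψ : K →+* Module.End k V :=
    Ideal.Quotient.lift (Ideal.span {q}) (Polynomial.aeval f).toRingHom H with hψ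
  have hψmk : ∀ g : Polynomial k, ψ (AdjoinRoot.mk q g) = Polynomial.aeval f g := fun g =>
    Ideal.Quotient.lift_mk _ _ _
  letI : Module K V := Module.compHom V ψ
  have hsmul : ∀ (s : K) (v : V), s • v = ψ s v := fun s v => rfl
  haveI : IsScalarTower k K V := by
    constructor
    intro a s v
    rw [hsmul, hsmul, Algebra.smul_def, map_mul]
    have h1 : ψ (algebraMap k K a) = algebraMap k (Module.End k V) a := by
      rw [AdjoinRoot.algebraMap_eq]
      have : AdjoinRoot.of q a = AdjoinRoot.mk q (Polynomial.C a) := rfl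
      rw [this, hψmk, Polynomial.aeval_C]
    rw [h1, ← Algebra.smul_def]
    exact LinearMap.smul_apply _ _ _
  haveI : FiniteDimensional K V := FiniteDimensional.right k K V
  haveI : Module.Free K V := Module.Free.of_divisionRing K V
  have hrk : Module.finrank k K * Module.finrank K V = n := by
    rw [Module.finrank_mul_finrank, Module.finrank_fin_fun]
  have hkK : Module.finrank k K = 2 := by
    rw [(AdjoinRoot.powerBasis hqmonic.ne_zero).finrank, AdjoinRoot.powerBasis_dim, hqdeg]
  set m := Module.finrank K V with hm
  rw [hkK] at hrk
  have hnm : n = 2 * m := by omega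
  refine ⟨⟨m, by omega⟩, ?_⟩
  -- bases
  set pb : PowerBasis k K := AdjoinRoot.powerBasis hqmonic.ne_zero with hpb
  have hdim : pb.dim = 2 := by rw [hpb, AdjoinRoot.powerBasis_dim, hqdeg]
  set w : Module.Basis (Fin m) K V := Module.finBasis K V with hw
  let e : Fin pb.dim × Fin m ≃ Fin n :=
    { toFun := fun x => ⟨2 * x.2.1 + 1 - x.1.1, by
        have h1 := x.1.2; have h2 := x.2.2; omega⟩
      invFun := fun t => (⟨1 - t.1 % 2, by omega⟩, ⟨t.1 / 2, by have := t.2; omega⟩)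
      left_inv := by
        rintro ⟨⟨i, hi⟩, ⟨j, hj⟩⟩
        rw [hdim] at hi
        refine Prod.ext (Fin.ext ?_) (Fin.ext ?_) <;> simp <;> omega
      right_inv := by
        rintro ⟨t, ht⟩
        refine Fin.ext ?_
        simp
        omega }
  set B : Module.Basis (Fin n) k V := (pb.basis.smulTower w).reindex e with hB
  have hb : ∀ t : Fin n, B t =
      (AdjoinRoot.root q ^ (1 - (t : ℕ) % 2)) • w ⟨(t : ℕ) / 2, by have := t.2; omega⟩ := by
    intro t
    rw [hB, Module.Basis.reindex_apply, Module.Basis.smulTower_apply, pb.basis_eq_pow]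
    rfl
  have hroot : ∀ v : V, (AdjoinRoot.root q) • v = Matrix.mulVec (A : Matrix (Fin n) (Fin n) k) v := by
    intro v
    rw [hsmul]
    have h1 : ψ (AdjoinRoot.root q) = f := by
      have h2 := hψmk Polynomial.X
      rwa [Polynomial.aeval_X] at h2
    rw [h1, hf, Matrix.mulVecLin_apply]
  have hff : ∀ v : V, Matrix.mulVec (A : Matrix (Fin n) (Fin n) k)
      (Matrix.mulVec (A : Matrix (Fin n) (Fin n) k) v) = p • v := by
    intro v
    rw [Matrix.mulVec_mulVec, ← pow_two, hA2, Matrix.smul_mulVec, Matrix.one_mulVec]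
  set P : Matrix (Fin n) (Fin n) k := (Pi.basisFun k (Fin n)).toMatrix ⇑B with hPdef
  have hPapp : ∀ i j : Fin n, P i j = B j i := by
    intro i j
    rw [hPdef, Module.Basis.toMatrix_apply, Pi.basisFun_repr]
  have hAP : (A : Matrix (Fin n) (Fin n) k) * P = P * Lhalf n p := by
    ext i j
    rw [Matrix.mul_apply, Matrix.mul_apply]
    by_cases hj : (j : ℕ) % 2 = 1
    · -- odd column: A *ᵥ B j = B (j-1)
      have hj1 : 1 ≤ (j : ℕ) := by omega
      set l₀ : Fin n := ⟨(j : ℕ) - 1, by have := j.2; omega⟩ with hl₀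
      have hl₀v : (l₀ : ℕ) = (j : ℕ) - 1 := rfl
      have hsum : ∑ l, P i l * Lhalf n p l j = B l₀ i := by
        rw [Finset.sum_eq_single l₀]
        · rw [hPapp]
          have : Lhalf n p l₀ j = 1 := by
            simp only [Lhalf, Matrix.of_apply]
            rw [if_pos ⟨by omega, by omega⟩]
          rw [this, mul_one]
        · intro l _ hl
          have : Lhalf n p l j = 0 := by
            simp only [Lhalf, Matrix.of_apply]
            rw [if_neg, if_neg]
            · rintro ⟨h1, h2⟩; omega
            · rintro ⟨h1, h2⟩
              refine hl (Fin.ext ?_)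
              rw [hl₀v]
              omega
          rw [this, mul_zero]
        · intro h; exact absurd (Finset.mem_univ l₀) h
      rw [hsum]
      have hcol : Matrix.mulVec (A : Matrix (Fin n) (Fin n) k) (B j) = B l₀ := by
        rw [hb j, hb l₀, hj]
        have hidx : (⟨(j : ℕ) / 2, by have := j.2; omega⟩ : Fin m) =
            ⟨(l₀ : ℕ) / 2, by have := l₀.2; omega⟩ := by
          refine Fin.ext ?_
          show (j : ℕ) / 2 = (l₀ : ℕ) / 2
          rw [hl₀v]; omega
        have hl0m : ((l₀ : ℕ)) % 2 = 0 := by rw [hl₀v]; omega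
        rw [hl0m]
        norm_num
        rw [← hidx, hroot]
      calc ∑ l, (A : Matrix (Fin n) (Fin n) k) i l * P l j
          = ∑ l, (A : Matrix (Fin n) (Fin n) k) i l * B j l := by
            simp_rw [hPapp]
        _ = Matrix.mulVec (A : Matrix (Fin n) (Fin n) k) (B j) i := rfl
        _ = B l₀ i := by rw [hcol]
    · -- even column: A *ᵥ B j = p • B (j+1)
      have hj0 : (j : ℕ) % 2 = 0 := by omega
      have hj1 : (j : ℕ) + 1 < n := by have := j.2; omega
      set l₀ : Fin n := ⟨(j : ℕ) + 1, hj1⟩ with hl₀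
      have hl₀v : (l₀ : ℕ) = (j : ℕ) + 1 := rfl
      have hsum : ∑ l, P i l * Lhalf n p l j = B l₀ i * p := by
        rw [Finset.sum_eq_single l₀]
        · rw [hPapp]
          have : Lhalf n p l₀ j = p := by
            simp only [Lhalf, Matrix.of_apply]
            rw [if_neg, if_pos ⟨by omega, by trivial⟩]
            rintro ⟨h1, h2⟩; omega
          rw [this]
        · intro l _ hl
          have : Lhalf n p l j = 0 := by
            simp only [Lhalf, Matrix.of_apply]
            rw [if_neg, if_neg]
            · rintro ⟨h1, h2⟩
              refine hl (Fin.ext ?_)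
              rw [hl₀v]
              omega
            · rintro ⟨h1, h2⟩; omega
          rw [this, mul_zero]
        · intro h; exact absurd (Finset.mem_univ l₀) h
      rw [hsum]
      have hcol : Matrix.mulVec (A : Matrix (Fin n) (Fin n) k) (B j) =
          p • B l₀ := by
        rw [hb j, hb l₀, hj0]
        have hl0m : ((l₀ : ℕ)) % 2 = 1 := by rw [hl₀v]; omega
        have hidx : (⟨(j : ℕ) / 2, by have := j.2; omega⟩ : Fin m) =
            ⟨(l₀ : ℕ) / 2, by have := l₀.2; omega⟩ := by
          refine Fin.ext ?_
          show (j : ℕ) / 2 = (l₀ : ℕ) / 2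
          rw [hl₀v]; omega
        rw [hl0m]
        norm_num
        rw [← hidx, hroot, hff]
      calc ∑ l, (A : Matrix (Fin n) (Fin n) k) i l * P l j
          = Matrix.mulVec (A : Matrix (Fin n) (Fin n) k) (B j) i := by
            simp_rw [hPapp]; rfl
        _ = (p • B l₀) i := by rw [hcol]
        _ = B l₀ i * p := by rw [Pi.smul_apply, smul_eq_mul, mul_comm]
  haveI hPinv : Invertible P := (Pi.basisFun k (Fin n)).invertibleToMatrix B
  refine ⟨(unitOfInvertible P)⁻¹, ?_⟩
  have h1 : (((unitOfInvertible P)⁻¹ : (Matrix (Fin n) (Fin n) k)ˣ) :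
      Matrix (Fin n) (Fin n) k) = ⅟P := rfl
  have h2 : ((((unitOfInvertible P)⁻¹)⁻¹ : (Matrix (Fin n) (Fin n) k)ˣ) :
      Matrix (Fin n) (Fin n) k) = P := by
    rw [inv_inv]
    rfl
  rw [h1, h2, mul_assoc, hAP, ← mul_assoc, invOf_mul_self, one_mul]
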